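/- Let $U_{(k)}$ be the $k$th order statistic of $n$ i.i.d. uniform random variables on $[0,1]$, and set $\tau := k/(n+1)$. Then for all $c \ge 0$, $\mathbb{P}(U_{(k)} - \tau \ge c) \le \exp\left(-\frac{(n+1)c^2}{2\tau(1-\tau) + 2c}\right)$ and $\mathbb{P}(\tau - U_{(k)} \ge c) \le \exp\left(-\frac{(n+1)c^2}{2\tau(1-\tau) + 2c}\right)$. -/

import Mathlib

open MeasureTheory
open scoped ENNReal

/-- The `k`-th smallest value (1-indexed) among `ω 0, …, ω (n-1)`. -/
noncomputable def orderStat (n k : ℕ) (ω : Fin n → ℝ) : ℝ :=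
  sInf {x : ℝ | k ≤ (Finset.univ.filter fun i => ω i ≤ x).card}

lemma lintegral_pi_prod_pow (μ : Measure ℝ) [SigmaFinite μ] {g : ℝ → ℝ≥0∞}
    (hg : Measurable g) :
    ∀ n : ℕ, ∫⁻ ω, ∏ i, g (ω i) ∂(Measure.pi fun _ : Fin n => μ)
      = (∫⁻ y, g y ∂μ) ^ n := by
  intro n
  induction n with
  | zero =>
      simp only [Finset.univ_eq_empty, Finset.prod_empty, pow_zero, lintegral_const, one_mul]
      rw [Measure.pi_univ]
      simp
  | succ n ih =>
      have mp := (measurePreserving_piFinSuccAbove (fun _ : Fin (n + 1) => μ) 0).symm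
      have hF : Measurable fun ω : Fin (n + 1) → ℝ => ∏ i, g (ω i) := by
        exact Finset.measurable_prod _ fun i _ => hg.comp (measurable_pi_apply i)
      rw [← mp.lintegral_comp hF]
      have : ∀ z : ℝ × (Fin n → ℝ),
          (∏ i, g ((MeasurableEquiv.piFinSuccAbove (fun _ : Fin (n+1) => ℝ) 0).symm z i))
            = g z.1 * ∏ i : Fin n, g (z.2 i) := by
        intro z
        simp only [MeasurableEquiv.piFinSuccAbove_symm_apply, Fin.insertNthEquiv,
          Fin.insertNth_zero, Equiv.coe_fn_mk]
        rw [Fin.prod_univ_succ]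
        simp [Fin.zero_succAbove]
      simp_rw [this]
      have hG : Measurable fun x : Fin n → ℝ => ∏ i, g (x i) := by
        exact Finset.measurable_prod _ fun i _ => hg.comp (measurable_pi_apply i)
      rw [lintegral_prod_mul hg.aemeasurable hG.aemeasurable, ih, pow_succ, mul_comm]
/-- Chernoff-type bound: the probability that at least `m` of the `n` coordinates lie
in a set `S` of probability `p` is at most `(p*r + (1-p))^n / r^m` for any `r ≥ 1`. -/
lemma chernoff_count (n m : ℕ) (S : Set ℝ) (hS : MeasurableSet S) {p r : ℝ}
    (hp0 : 0 ≤ p) (hp1 : p ≤ 1) (hr : 1 ≤ r)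
    (hμS : volume.restrict (Set.Icc (0 : ℝ) 1) S = ENNReal.ofReal p) :
    (Measure.pi fun _ : Fin n => volume.restrict (Set.Icc (0 : ℝ) 1))
        {ω | ∃ T : Finset (Fin n), m ≤ T.card ∧ ∀ i ∈ T, ω i ∈ S}
      ≤ ENNReal.ofReal ((p * r + (1 - p)) ^ n / r ^ m) := by
  classical
  set μ₀ := volume.restrict (Set.Icc (0 : ℝ) 1) with hμ₀
  set P := Measure.pi fun _ : Fin n => μ₀ with hP
  have hr0 : (0 : ℝ) < r := lt_of_lt_of_le one_pos hr
  set g : ℝ → ℝ≥0∞ := fun y => if y ∈ S then ENNReal.ofReal r else 1 with hg_def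
  have hg : Measurable g := Measurable.ite hS measurable_const measurable_const
  have hg1 : ∀ y, 1 ≤ g y := by
    intro y
    by_cases h : y ∈ S
    · simp only [hg_def, if_pos h]
      exact ENNReal.one_le_ofReal.2 hr
    · simp [hg_def, if_neg h]
  set h : (Fin n → ℝ) → ℝ≥0∞ := fun ω => ∏ i, g (ω i) with hh_def
  have hh : Measurable h := by
    exact Finset.measurable_prod _ fun i _ => hg.comp (measurable_pi_apply i)
  -- on the event, h is at least (ofReal r)^m
  have key : {ω : Fin n → ℝ | ∃ T : Finset (Fin n), m ≤ T.card ∧ ∀ i ∈ T, ω i ∈ S}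
      ⊆ {ω | ENNReal.ofReal (r ^ m) ≤ h ω} := by
    rintro ω ⟨T, hT, hTS⟩
    have h1 : (∏ i ∈ T, g (ω i)) ≤ h ω :=
      Finset.prod_le_prod_of_subset_of_one_le' (Finset.subset_univ _)
        (fun i _ _ => hg1 _)
    have h2 : (∏ i ∈ T, g (ω i)) = (ENNReal.ofReal r) ^ T.card := by
      rw [Finset.prod_congr rfl (fun i hi => ?_), Finset.prod_const]
      simp [hg_def, hTS i hi]
    have h3 : (ENNReal.ofReal r) ^ m ≤ (ENNReal.ofReal r) ^ T.card :=
      pow_le_pow_right' (ENNReal.one_le_ofReal.2 hr) hT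
    have := h3.trans (h2 ▸ h1)
    simpa [ENNReal.ofReal_pow hr0.le] using this
  -- the integral of g
  have hμ₀S : μ₀ Sᶜ = ENNReal.ofReal (1 - p) := by
    have huniv : μ₀ Set.univ = 1 := by
      rw [hμ₀, Measure.restrict_apply_univ, Real.volume_Icc]; norm_num
    rw [measure_compl hS (by rw [hμS]; exact ENNReal.ofReal_ne_top), hμS, huniv,
      ENNReal.ofReal_sub _ hp0, ENNReal.ofReal_one]
  have hint : ∫⁻ y, g y ∂μ₀ = ENNReal.ofReal (p * r + (1 - p)) := by
    have : g = fun y => S.indicator (fun _ => ENNReal.ofReal r) y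
        + Sᶜ.indicator (fun _ => 1) y := by
      funext y
      by_cases hy : y ∈ S <;> simp [hg_def, hy]
    rw [this, lintegral_add_left ((measurable_const).indicator hS),
      lintegral_indicator hS, lintegral_indicator hS.compl,
      setLIntegral_const, setLIntegral_const, hμS, hμ₀S, one_mul,
      ← ENNReal.ofReal_mul hr0.le, ← ENNReal.ofReal_add (by positivity)
        (by linarith), mul_comm r p]
  -- Markov
  have markov : ENNReal.ofReal (r ^ m) * P {ω | ∃ T : Finset (Fin n),
      m ≤ T.card ∧ ∀ i ∈ T, ω i ∈ S} ≤ ENNReal.ofReal ((p * r + (1 - p)) ^ n) := by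
    calc ENNReal.ofReal (r ^ m) * P {ω | ∃ T : Finset (Fin n),
          m ≤ T.card ∧ ∀ i ∈ T, ω i ∈ S}
        ≤ ENNReal.ofReal (r ^ m) * P {ω | ENNReal.ofReal (r ^ m) ≤ h ω} :=
          mul_le_mul_right (measure_mono key) _
      _ ≤ ∫⁻ ω, h ω ∂P := mul_meas_ge_le_lintegral₀ hh.aemeasurable _
      _ = (∫⁻ y, g y ∂μ₀) ^ n := lintegral_pi_prod_pow μ₀ hg n
      _ = ENNReal.ofReal ((p * r + (1 - p)) ^ n) := by
          rw [hint, ← ENNReal.ofReal_pow (by nlinarith : (0:ℝ) ≤ p * r + (1 - p))]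
  -- divide by r^m
  have hrm : (0 : ℝ) < r ^ m := by positivity
  have hne0 : ENNReal.ofReal (r ^ m) ≠ 0 := by
    simp [ENNReal.ofReal_eq_zero, not_le, hrm]
  have hnetop : ENNReal.ofReal (r ^ m) ≠ ⊤ := ENNReal.ofReal_ne_top
  calc P {ω | ∃ T : Finset (Fin n), m ≤ T.card ∧ ∀ i ∈ T, ω i ∈ S}
      = (ENNReal.ofReal (r ^ m))⁻¹ * (ENNReal.ofReal (r ^ m)
          * P {ω | ∃ T : Finset (Fin n), m ≤ T.card ∧ ∀ i ∈ T, ω i ∈ S}) := by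
        rw [← mul_assoc, ENNReal.inv_mul_cancel hne0 hnetop, one_mul]
    _ ≤ (ENNReal.ofReal (r ^ m))⁻¹ * ENNReal.ofReal ((p * r + (1 - p)) ^ n) :=
        mul_le_mul_right markov _
    _ = ENNReal.ofReal ((p * r + (1 - p)) ^ n / r ^ m) := by
        rw [ENNReal.ofReal_div_of_pos hrm, div_eq_mul_inv, mul_comm]
/-- Lower bound on the KL-type function `Ψ(τ+c, τ)`. -/
lemma psi_lb {τ c : ℝ} (hτ0 : 0 < τ) (hc : 0 ≤ c) (h1 : τ + c < 1) :
    c ^ 2 / (2 * τ * (1 - τ) + 2 * c)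
      ≤ τ * Real.log (τ / (τ + c)) + (1 - τ) * Real.log ((1 - τ) / (1 - τ - c)) := by
  set A : ℝ := τ * (1 - τ) with hA
  have hτ1 : τ < 1 := by linarith
  have hA0 : 0 < A := by nlinarith
  set g : ℝ → ℝ := fun u => τ * (Real.log τ - Real.log (τ + u))
      + (1 - τ) * (Real.log (1 - τ) - Real.log (1 - τ - u)) - u ^ 2 / (2 * (A + u)) with hg
  -- derivative of g on [0, c]
  have hderiv : ∀ u ∈ Set.Icc (0 : ℝ) c, HasDerivAt g
      (τ * -(1 / (τ + u)) + (1 - τ) * -((-1) / (1 - τ - u))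
        - ((2 * u ^ 1 * (2 * (A + u)) - u ^ 2 * (2 * 1)) / (2 * (A + u)) ^ 2)) u := by
    intro u hu
    obtain ⟨hu0, huc⟩ := hu
    have hτu : 0 < τ + u := by linarith
    have h1τu : 0 < 1 - τ - u := by linarith
    have hAu : 0 < A + u := by linarith
    have d1 : HasDerivAt (fun u : ℝ => Real.log (τ + u)) (1 / (τ + u)) u := by
      simpa using (HasDerivAt.log ((hasDerivAt_id u).const_add τ) (by simp only [id_eq]; linarith))
    have d2 : HasDerivAt (fun u : ℝ => Real.log (1 - τ - u)) ((-1) / (1 - τ - u)) u := by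
      have : HasDerivAt (fun u : ℝ => 1 - τ - u) (-1) u := by
        simpa using (hasDerivAt_id u).const_sub (1 - τ)
      exact HasDerivAt.log this (by linarith)  -- f u = 1 - τ - u
    have d3 : HasDerivAt (fun u : ℝ => u ^ 2 / (2 * (A + u)))
        ((2 * u ^ 1 * (2 * (A + u)) - u ^ 2 * (2 * 1)) / (2 * (A + u)) ^ 2) u := by
      exact HasDerivAt.div (by simpa using hasDerivAt_pow 2 u)
        (by simpa using ((hasDerivAt_id u).const_add A).const_mul 2) (by positivity)
    exact (((d1.const_sub (Real.log τ)).const_mul τ).add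
      ((d2.const_sub (Real.log (1 - τ))).const_mul (1 - τ))).sub d3
  -- the derivative is nonnegative on the interior
  have hpos : ∀ u ∈ Set.Ioo (0 : ℝ) c, 0 ≤ deriv g u := by
    intro u hu
    obtain ⟨hu0, huc⟩ := hu
    have hmem : u ∈ Set.Icc (0 : ℝ) c := ⟨hu0.le, huc.le⟩
    rw [(hderiv u hmem).deriv]
    have hτu : 0 < τ + u := by linarith
    have h1τu : 0 < 1 - τ - u := by linarith
    have hAu : 0 < A + u := by linarith
    have e1 : τ * -(1 / (τ + u)) + (1 - τ) * -((-1) / (1 - τ - u))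
        = u / ((τ + u) * (1 - τ - u)) := by
      field_simp
      ring
    have e2 : (2 * u ^ 1 * (2 * (A + u)) - u ^ 2 * (2 * 1)) / (2 * (A + u)) ^ 2
        = u * (2 * A + u) / (2 * (A + u) ^ 2) := by
      field_simp
      ring
    rw [e1, e2, sub_nonneg]
    have step1 : u * (2 * A + u) / (2 * (A + u) ^ 2) ≤ u / (A + u) := by
      rw [div_le_div_iff₀ (by positivity) hAu]
      nlinarith [mul_nonneg hu0.le (mul_nonneg hu0.le hAu.le)]
    have step2 : u / (A + u) ≤ u / ((τ + u) * (1 - τ - u)) := by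
      apply div_le_div_of_nonneg_left hu0.le (by positivity)
      nlinarith
    exact step1.trans step2
  -- conclude by monotonicity
  have hcont : ContinuousOn g (Set.Icc 0 c) := fun u hu =>
    (hderiv u hu).continuousAt.continuousWithinAt
  have hdiff : DifferentiableOn ℝ g (interior (Set.Icc (0 : ℝ) c)) := by
    intro u hu
    rw [interior_Icc] at hu
    exact ((hderiv u ⟨hu.1.le, hu.2.le⟩).differentiableAt).differentiableWithinAt
  have hmono : MonotoneOn g (Set.Icc (0 : ℝ) c) := by
    apply monotoneOn_of_deriv_nonneg (convex_Icc 0 c) hcont hdiff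
    intro u hu
    rw [interior_Icc] at hu
    exact hpos u hu
  have h0c : g 0 ≤ g c := hmono (Set.left_mem_Icc.2 hc) (Set.right_mem_Icc.2 hc) hc
  have hg0 : g 0 = 0 := by simp [hg]
  rw [hg0] at h0c
  have hgc : g c = τ * Real.log (τ / (τ + c)) + (1 - τ) * Real.log ((1 - τ) / (1 - τ - c))
      - c ^ 2 / (2 * τ * (1 - τ) + 2 * c) := by
    rw [hg]
    have hτc : 0 < τ + c := by linarith
    have h1τc : 0 < 1 - τ - c := by linarith
    rw [Real.log_div hτ0.ne' hτc.ne', Real.log_div (by linarith : (0:ℝ) < 1 - τ).ne' h1τc.ne']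
    rw [hA]
    ring_nf
  rw [hgc] at h0c
  linarith

section orderStatLemmas

variable {n k : ℕ}

lemma orderStat_set_nonempty (hk : 1 ≤ k) (hkn : k ≤ n) (ω : Fin n → ℝ) :
    {x : ℝ | k ≤ (Finset.univ.filter fun i => ω i ≤ x).card}.Nonempty := by
  have hn : 0 < n := lt_of_lt_of_le hk hkn
  haveI : Nonempty (Fin n) := Fin.pos_iff_nonempty.1 hn
  have hne : (Finset.univ : Finset (Fin n)).Nonempty := Finset.univ_nonempty
  refine ⟨Finset.univ.sup' hne ω, ?_⟩
  have heq : (Finset.univ.filter fun i => ω i ≤ Finset.univ.sup' hne ω) = Finset.univ :=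
    Finset.filter_true_of_mem fun i _ => Finset.le_sup' ω (Finset.mem_univ i)
  simp only [Set.mem_setOf_eq, heq]
  simpa using hkn

lemma orderStat_set_bddBelow (hk : 1 ≤ k) (hkn : k ≤ n) (ω : Fin n → ℝ) :
    BddBelow {x : ℝ | k ≤ (Finset.univ.filter fun i => ω i ≤ x).card} := by
  have hn : 0 < n := lt_of_lt_of_le hk hkn
  haveI : Nonempty (Fin n) := Fin.pos_iff_nonempty.1 hn
  have hne : (Finset.univ : Finset (Fin n)).Nonempty := Finset.univ_nonempty
  refine ⟨Finset.univ.inf' hne ω, ?_⟩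
  intro x hx
  have hcard : 1 ≤ (Finset.univ.filter fun i => ω i ≤ x).card := le_trans hk hx
  obtain ⟨i, hi⟩ := Finset.card_pos.1 hcard
  obtain ⟨-, hix⟩ := Finset.mem_filter.1 hi
  exact le_trans (Finset.inf'_le ω (Finset.mem_univ i)) hix

/-- If at least `k` coordinates are `≤ x`, then the order statistic is `≤ x`. -/
lemma orderStat_le (hk : 1 ≤ k) (hkn : k ≤ n) {ω : Fin n → ℝ} {x : ℝ}
    (hx : k ≤ (Finset.univ.filter fun i => ω i ≤ x).card) :
    orderStat n k ω ≤ x :=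
  csInf_le (orderStat_set_bddBelow hk hkn ω) hx

/-- Upper-tail inclusion: if `t ≤ U_(k)` then at least `n+1-k` coordinates are `≥ t`. -/
lemma upper_tail_subset (hk : 1 ≤ k) (hkn : k ≤ n) {ω : Fin n → ℝ} {t : ℝ}
    (ht : t ≤ orderStat n k ω) :
    ∃ T : Finset (Fin n), n + 1 - k ≤ T.card ∧ ∀ i ∈ T, t ≤ ω i := by
  classical
  set F := Finset.univ.filter fun i => ω i < t with hF
  have hcard : F.card < k := by
    by_contra hcon
    push_neg at hcon
    have hFne : F.Nonempty := Finset.card_pos.1 (lt_of_lt_of_le hk hcon)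
    set x := F.sup' hFne ω with hxdef
    have hxt : x < t := Finset.sup'_lt_iff hFne |>.2 fun i hi => (Finset.mem_filter.1 hi).2
    have hsub : F ⊆ Finset.univ.filter fun i => ω i ≤ x := by
      intro i hi
      exact Finset.mem_filter.2 ⟨Finset.mem_univ i, Finset.le_sup' ω hi⟩
    have : orderStat n k ω ≤ x :=
      orderStat_le hk hkn (le_trans hcon (Finset.card_le_card hsub))
    linarith
  refine ⟨Finset.univ.filter fun i => ¬ ω i < t, ?_, ?_⟩
  · have hsplit : (Finset.univ.filter fun i => ¬ ω i < t) = Finset.univ \ F := by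
      rw [hF, Finset.filter_not]
    rw [hsplit, Finset.card_sdiff_of_subset (Finset.filter_subset _ _), Finset.card_univ,
      Fintype.card_fin, ← hF]
    omega
  · intro i hi
    exact not_lt.1 (Finset.mem_filter.1 hi).2

/-- Lower-tail inclusion: if `U_(k) ≤ s` then at least `k` coordinates are `≤ s`. -/
lemma lower_tail_subset (hk : 1 ≤ k) (hkn : k ≤ n) {ω : Fin n → ℝ} {s : ℝ}
    (hs : orderStat n k ω ≤ s) :
    ∃ T : Finset (Fin n), k ≤ T.card ∧ ∀ i ∈ T, ω i ≤ s := by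
  classical
  refine ⟨Finset.univ.filter fun i => ω i ≤ s, ?_, fun i hi => (Finset.mem_filter.1 hi).2⟩
  by_contra hcon
  push_neg at hcon
  set G := Finset.univ.filter fun i => ¬ ω i ≤ s with hG
  have hGcard : 1 ≤ G.card := by
    have hsplit : G = Finset.univ \ (Finset.univ.filter fun i => ω i ≤ s) := by
      rw [hG, Finset.filter_not]
    rw [hsplit, Finset.card_sdiff_of_subset (Finset.filter_subset _ _), Finset.card_univ,
      Fintype.card_fin]
    omega
  have hGne : G.Nonempty := Finset.card_pos.1 hGcard
  set b := G.inf' hGne ω with hb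
  have hsb : s < b := by
    rw [hb, Finset.lt_inf'_iff]
    intro i hi
    exact not_le.1 (Finset.mem_filter.1 hi).2
  have hlb : b ≤ orderStat n k ω := by
    apply le_csInf (orderStat_set_nonempty hk hkn ω)
    intro x hx
    have hex : ∃ i, ω i ≤ x ∧ ¬ ω i ≤ s := by
      by_contra hno
      push_neg at hno
      have hsub : (Finset.univ.filter fun i => ω i ≤ x)
          ⊆ Finset.univ.filter fun i => ω i ≤ s := by
        intro i hi
        exact Finset.mem_filter.2 ⟨Finset.mem_univ i, hno i (Finset.mem_filter.1 hi).2⟩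
      exact absurd (hx.trans (Finset.card_le_card hsub)) (not_le.2 hcon)
    obtain ⟨i, hix, his⟩ := hex
    exact le_trans (Finset.inf'_le ω (Finset.mem_filter.2 ⟨Finset.mem_univ i, his⟩)) hix
  linarith

end orderStatLemmas

/-- Exponential inequality for uniform order statistics: with `τ = k/(n+1)`,
`P(±(U_(k) - τ) ≥ c) ≤ exp(-(n+1)c²/(2τ(1-τ)+2c))`. -/
theorem uniform_order_statistic_tail (n k : ℕ) (hk : 1 ≤ k) (hkn : k ≤ n) :
    let P : Measure (Fin n → ℝ) :=
      Measure.pi fun _ => volume.restrict (Set.Icc (0 : ℝ) 1)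
    let τ : ℝ := k / (n + 1)
    ∀ c : ℝ, 0 ≤ c →
      P {ω | c ≤ orderStat n k ω - τ} ≤
          ENNReal.ofReal
            (Real.exp (-((n + 1) * c ^ 2) / (2 * τ * (1 - τ) + 2 * c))) ∧
        P {ω | c ≤ τ - orderStat n k ω} ≤
          ENNReal.ofReal
            (Real.exp (-((n + 1) * c ^ 2) / (2 * τ * (1 - τ) + 2 * c))) := by
  intro P τ c hc
  have hk1 : (1 : ℝ) ≤ (k : ℝ) := by exact_mod_cast hk
  have hkn' : (k : ℝ) ≤ (n : ℝ) := by exact_mod_cast hkn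
  have hn1 : (0 : ℝ) < (n : ℝ) + 1 := by positivity
  have hτdef : τ = (k : ℝ) / ((n : ℝ) + 1) := rfl
  have hτ0 : 0 < τ := div_pos (by linarith) hn1
  have hτ1 : τ < 1 := by rw [hτdef, div_lt_one hn1]; linarith
  have hτn : ((n : ℝ) + 1) * τ = (k : ℝ) := by rw [hτdef]; field_simp
  clear_value τ
  have hD : (0 : ℝ) < 2 * τ * (1 - τ) + 2 * c := by nlinarith
  have h1τ : (0 : ℝ) < 1 - τ := by linarith
  have hcastm : ((n + 1 - k : ℕ) : ℝ) = (n : ℝ) + 1 - (k : ℝ) := by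
    have : k ≤ n + 1 := by omega
    push_cast [this]
    ring
  constructor
  · -- upper tail
    set t : ℝ := τ + c with ht
    clear_value t
    have hsub : {ω : Fin n → ℝ | c ≤ orderStat n k ω - τ}
        ⊆ {ω | ∃ T : Finset (Fin n), n + 1 - k ≤ T.card ∧ ∀ i ∈ T, ω i ∈ Set.Ici t} := by
      intro ω hω
      simp only [Set.mem_setOf_eq] at hω ⊢
      exact upper_tail_subset hk hkn (by rw [ht]; linarith)
    by_cases hlt : t < 1
    · have ht0 : 0 < t := by rw [ht]; linarith
      have h1t : 0 < 1 - t := by linarith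
      have hμS : (volume.restrict (Set.Icc (0 : ℝ) 1)) (Set.Ici t)
          = ENNReal.ofReal (1 - t) := by
        rw [Measure.restrict_apply measurableSet_Ici]
        have hset : Set.Ici t ∩ Set.Icc (0:ℝ) 1 = Set.Icc t 1 := by
          ext y
          simp only [Set.mem_inter_iff, Set.mem_Ici, Set.mem_Icc]
          constructor
          · rintro ⟨h1, _, h3⟩; exact ⟨h1, h3⟩
          · rintro ⟨h1, h2⟩; exact ⟨h1, le_trans ht0.le h1, h2⟩
        rw [hset, Real.volume_Icc]
      set r : ℝ := t * (1 - τ) / ((1 - t) * τ) with hr_def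
      clear_value r
      have hr1 : 1 ≤ r := by
        rw [hr_def, le_div_iff₀ (mul_pos h1t hτ0)]
        nlinarith
      refine le_trans (measure_mono hsub) (le_trans (chernoff_count n (n + 1 - k)
        (Set.Ici t) measurableSet_Ici (by linarith) (by linarith) hr1 hμS)
        (ENNReal.ofReal_le_ofReal ?_))
      set a : ℝ := t / τ with ha_def
      clear_value a
      set b : ℝ := (1 - t) / (1 - τ) with hb_def
      clear_value b
      have ha0 : 0 < a := by rw [ha_def]; exact div_pos ht0 hτ0
      have ha1 : 1 ≤ a := by rw [ha_def, le_div_iff₀ hτ0]; rw [ht]; nlinarith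
      have hb0 : 0 < b := by rw [hb_def]; exact div_pos h1t h1τ
      have hmn : n + 1 - k ≤ n := by omega
      have hre : r = a / b := by
        rw [hr_def, ha_def, hb_def]
        field_simp [hτ0.ne', h1τ.ne', h1t.ne']
      have hbase : (1 - t) * r + (1 - (1 - t)) = a := by
        rw [hr_def, ha_def]
        field_simp [hτ0.ne', h1τ.ne', h1t.ne']
        ring
      have hZ : ((1 - t) * r + (1 - (1 - t))) ^ n / r ^ (n + 1 - k)
          = a ^ (k - 1) * b ^ (n + 1 - k) := by
        have hk1n : k - 1 = n - (n + 1 - k) := by omega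
        rw [hbase, hre, div_pow, div_div_eq_mul_div, hk1n,
          pow_sub₀ a (ne_of_gt ha0) hmn]
        ring
      have hstep : a ^ (k - 1) * b ^ (n + 1 - k) ≤ a ^ k * b ^ (n + 1 - k) :=
        mul_le_mul_of_nonneg_right (pow_le_pow_right₀ ha1 (Nat.sub_le k 1))
          (by positivity)
      have hexp : a ^ k * b ^ (n + 1 - k)
          = Real.exp ((k : ℝ) * Real.log a + ((n + 1 - k : ℕ) : ℝ) * Real.log b) := by
        rw [Real.exp_add, Real.exp_nat_mul, Real.exp_nat_mul, Real.exp_log ha0,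
          Real.exp_log hb0]
      have hpsi := psi_lb hτ0 hc (by rw [ht] at hlt; exact hlt)
      have hloga : Real.log a = -Real.log (τ / (τ + c)) := by
        rw [ha_def, ht, ← Real.log_inv, inv_div]
      have hlogb : Real.log b = -Real.log ((1 - τ) / (1 - τ - c)) := by
        rw [hb_def, ht, ← Real.log_inv, inv_div]
        congr 2
        ring
      have hkey : (k : ℝ) * Real.log a + ((n + 1 - k : ℕ) : ℝ) * Real.log b
          ≤ -(((n : ℝ) + 1) * c ^ 2) / (2 * τ * (1 - τ) + 2 * c) := by
        rw [hloga, hlogb, hcastm]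
        have hmul := mul_le_mul_of_nonneg_left hpsi hn1.le
        have hdist : ((n : ℝ) + 1) * (τ * Real.log (τ / (τ + c))
            + (1 - τ) * Real.log ((1 - τ) / (1 - τ - c)))
            = (k : ℝ) * Real.log (τ / (τ + c))
              + ((n : ℝ) + 1 - k) * Real.log ((1 - τ) / (1 - τ - c)) := by
          linear_combination (Real.log (τ / (τ + c))
            - Real.log ((1 - τ) / (1 - τ - c))) * hτn
        rw [hdist] at hmul
        have he2 : ((n : ℝ) + 1) * (c ^ 2 / (2 * τ * (1 - τ) + 2 * c))
            = (((n : ℝ) + 1) * c ^ 2) / (2 * τ * (1 - τ) + 2 * c) := by ring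
        rw [he2] at hmul
        rw [neg_div]
        linarith
      calc ((1 - t) * r + (1 - (1 - t))) ^ n / r ^ (n + 1 - k)
          = a ^ (k - 1) * b ^ (n + 1 - k) := hZ
        _ ≤ a ^ k * b ^ (n + 1 - k) := hstep
        _ = Real.exp ((k : ℝ) * Real.log a + ((n + 1 - k : ℕ) : ℝ) * Real.log b) := hexp
        _ ≤ Real.exp (-(((n : ℝ) + 1) * c ^ 2) / (2 * τ * (1 - τ) + 2 * c)) :=
            Real.exp_le_exp.2 hkey
    · -- t ≥ 1 : the event is null
      push_neg at hlt
      have hnull : P {ω | c ≤ orderStat n k ω - τ} = 0 := by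
        have hsub2 : {ω : Fin n → ℝ | c ≤ orderStat n k ω - τ}
            ⊆ ⋃ i : Fin n, Function.eval i ⁻¹' Set.Ici (1 : ℝ) := by
          intro ω hω
          obtain ⟨T, hTcard, hT⟩ := hsub hω
          have hTne : T.Nonempty := Finset.card_pos.1 (by omega)
          obtain ⟨i, hi⟩ := hTne
          refine Set.mem_iUnion.2 ⟨i, ?_⟩
          have := hT i hi
          simp only [Set.mem_Ici] at this
          simp only [Set.mem_preimage, Function.eval, Set.mem_Ici]
          linarith
        refine measure_mono_null hsub2 (measure_iUnion_null fun i =>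
          Measure.pi_eval_preimage_null _ ?_)
        rw [Measure.restrict_apply measurableSet_Ici]
        have hset : Set.Ici (1:ℝ) ∩ Set.Icc (0:ℝ) 1 = Set.Icc 1 1 := by
          ext y
          simp only [Set.mem_inter_iff, Set.mem_Ici, Set.mem_Icc]
          constructor
          · rintro ⟨h1, _, h3⟩; exact ⟨h1, h3⟩
          · rintro ⟨h1, h2⟩; exact ⟨h1, by linarith, h2⟩
        rw [hset, Real.volume_Icc]
        norm_num
      rw [hnull]
      exact zero_le
  · -- lower tail
    set s : ℝ := τ - c with hs
    clear_value s
    have hsub : {ω : Fin n → ℝ | c ≤ τ - orderStat n k ω}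
        ⊆ {ω | ∃ T : Finset (Fin n), k ≤ T.card ∧ ∀ i ∈ T, ω i ∈ Set.Iic s} := by
      intro ω hω
      simp only [Set.mem_setOf_eq] at hω ⊢
      exact lower_tail_subset hk hkn (by rw [hs]; linarith)
    by_cases hpos : 0 < s
    · have hs1 : s < 1 := by rw [hs]; linarith
      have hcτ : c < τ := by rw [hs] at hpos; linarith
      have hμS : (volume.restrict (Set.Icc (0 : ℝ) 1)) (Set.Iic s)
          = ENNReal.ofReal s := by
        rw [Measure.restrict_apply measurableSet_Iic]
        have hset : Set.Iic s ∩ Set.Icc (0:ℝ) 1 = Set.Icc 0 s := by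
          ext y
          simp only [Set.mem_inter_iff, Set.mem_Iic, Set.mem_Icc]
          constructor
          · rintro ⟨h1, h2, _⟩; exact ⟨h2, h1⟩
          · rintro ⟨h1, h2⟩; exact ⟨h2, h1, by linarith⟩
        rw [hset, Real.volume_Icc, sub_zero]
      set r : ℝ := τ * (1 - s) / (s * (1 - τ)) with hr_def
      clear_value r
      have hr1 : 1 ≤ r := by
        rw [hr_def, le_div_iff₀ (mul_pos hpos (by linarith : (0:ℝ) < 1 - τ))]
        nlinarith
      refine le_trans (measure_mono hsub) (le_trans (chernoff_count n k
        (Set.Iic s) measurableSet_Iic hpos.le hs1.le hr1 hμS)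
        (ENNReal.ofReal_le_ofReal ?_))
      set a : ℝ := s / τ with ha_def
      clear_value a
      set b : ℝ := (1 - s) / (1 - τ) with hb_def
      clear_value b
      have ha0 : 0 < a := by rw [ha_def]; exact div_pos hpos hτ0
      have hb0 : 0 < b := by rw [hb_def]; exact div_pos (by linarith) h1τ
      have hb1 : 1 ≤ b := by rw [hb_def, le_div_iff₀ h1τ]; rw [hs]; nlinarith
      have h1s : (0 : ℝ) < 1 - s := by linarith
      have hre : r = b / a := by
        rw [hr_def, ha_def, hb_def]
        field_simp [hτ0.ne', h1τ.ne', hpos.ne', h1s.ne']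
      have hbase : s * r + (1 - s) = b := by
        rw [hr_def, hb_def]
        field_simp [hτ0.ne', h1τ.ne', hpos.ne', h1s.ne']
        ring
      have hZ : (s * r + (1 - s)) ^ n / r ^ k = a ^ k * b ^ (n - k) := by
        rw [hbase, hre, div_pow, div_div_eq_mul_div, pow_sub₀ b (ne_of_gt hb0) hkn]
        ring
      have hstep : a ^ k * b ^ (n - k) ≤ a ^ k * b ^ (n + 1 - k) :=
        mul_le_mul_of_nonneg_left (pow_le_pow_right₀ hb1 (by omega)) (by positivity)
      have hexp : a ^ k * b ^ (n + 1 - k)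
          = Real.exp ((k : ℝ) * Real.log a + ((n + 1 - k : ℕ) : ℝ) * Real.log b) := by
        rw [Real.exp_add, Real.exp_nat_mul, Real.exp_nat_mul, Real.exp_log ha0,
          Real.exp_log hb0]
      have hpsi := psi_lb (τ := 1 - τ) (by linarith) hc (by linarith)
      have e1 : (1 : ℝ) - (1 - τ) = τ := by ring
      have e2 : (1 - τ) + c = 1 - s := by rw [hs]; ring
      rw [e1, e2, ← hs] at hpsi
      -- hpsi : c^2/(2*(1-τ)*τ + 2*c) ≤ (1-τ)*log((1-τ)/(1-s)) + τ*log(τ/s)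
      have hloga : Real.log a = -Real.log (τ / s) := by
        rw [ha_def, ← Real.log_inv, inv_div]
      have hlogb : Real.log b = -Real.log ((1 - τ) / (1 - s)) := by
        rw [hb_def, ← Real.log_inv, inv_div]
      have hkey : (k : ℝ) * Real.log a + ((n + 1 - k : ℕ) : ℝ) * Real.log b
          ≤ -(((n : ℝ) + 1) * c ^ 2) / (2 * τ * (1 - τ) + 2 * c) := by
        rw [hloga, hlogb, hcastm]
        have hDeq : 2 * (1 - τ) * τ + 2 * c = 2 * τ * (1 - τ) + 2 * c := by
          ring
        rw [hDeq] at hpsi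
        have hmul := mul_le_mul_of_nonneg_left hpsi hn1.le
        have hdist : ((n : ℝ) + 1) * ((1 - τ) * Real.log ((1 - τ) / (1 - s))
            + τ * Real.log (τ / s))
            = ((n : ℝ) + 1 - k) * Real.log ((1 - τ) / (1 - s))
              + (k : ℝ) * Real.log (τ / s) := by
          linear_combination (Real.log (τ / s)
            - Real.log ((1 - τ) / (1 - s))) * hτn
        rw [hdist] at hmul
        have he2 : ((n : ℝ) + 1) * (c ^ 2 / (2 * τ * (1 - τ) + 2 * c))
            = (((n : ℝ) + 1) * c ^ 2) / (2 * τ * (1 - τ) + 2 * c) := by ring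
        rw [he2] at hmul
        rw [neg_div]
        linarith
      calc (s * r + (1 - s)) ^ n / r ^ k
          = a ^ k * b ^ (n - k) := hZ
        _ ≤ a ^ k * b ^ (n + 1 - k) := hstep
        _ = Real.exp ((k : ℝ) * Real.log a + ((n + 1 - k : ℕ) : ℝ) * Real.log b) := hexp
        _ ≤ Real.exp (-(((n : ℝ) + 1) * c ^ 2) / (2 * τ * (1 - τ) + 2 * c)) :=
            Real.exp_le_exp.2 hkey
    · -- s ≤ 0 : the event is null
      push_neg at hpos
      have hnull : P {ω | c ≤ τ - orderStat n k ω} = 0 := by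
        have hsub2 : {ω : Fin n → ℝ | c ≤ τ - orderStat n k ω}
            ⊆ ⋃ i : Fin n, Function.eval i ⁻¹' Set.Iic (0 : ℝ) := by
          intro ω hω
          obtain ⟨T, hTcard, hT⟩ := hsub hω
          have hTne : T.Nonempty := Finset.card_pos.1 (by omega)
          obtain ⟨i, hi⟩ := hTne
          refine Set.mem_iUnion.2 ⟨i, ?_⟩
          have := hT i hi
          simp only [Set.mem_Iic] at this
          simp only [Set.mem_preimage, Function.eval, Set.mem_Iic]
          linarith
        refine measure_mono_null hsub2 (measure_iUnion_null fun i =>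
          Measure.pi_eval_preimage_null _ ?_)
        rw [Measure.restrict_apply measurableSet_Iic]
        have hset : Set.Iic (0:ℝ) ∩ Set.Icc (0:ℝ) 1 = Set.Icc 0 0 := by
          ext y
          simp only [Set.mem_inter_iff, Set.mem_Iic, Set.mem_Icc]
          constructor
          · rintro ⟨h1, h2, _⟩; exact ⟨h2, h1⟩
          · rintro ⟨h1, h2⟩; exact ⟨h2, h1, by linarith⟩
        rw [hset, Real.volume_Icc]
        norm_num
      rw [hnull]
      exact zero_le
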